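/- Let A be a Koszul DG algebra. Then the Ext-algebra E = Ext*_A(k,k) carries a decreasing filtration E = F_0 ⊇ F_1 ⊇ F_2 ⊇ ··· making E a filtered algebra (F_n · F_m ⊆ F_{n+m}), defined by F_n = ∏_{i≥n} V(i)* where P(n)/P(n−1) = A ⊗ V(n) for a minimal semifree resolution P of k with standard filtration; moreover E is an augmented algebra via the projection onto F_0/F_1 ≅ k. -/

import Mathlib

open scoped TensorProduct

variable (k : Type) [Field k]

/-- A (cochain) differential graded algebra over `k`: a `ℤ`-graded `k`-algebra
together with a degree `1` differential which is a graded derivation. -/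
structure DGA where
  A : Type
  [ringA : Ring A]
  [algA : Algebra k A]
  grading : ℤ → Submodule k A
  [gradedA : GradedAlgebra grading]
  d : A →ₗ[k] A
  d_deg : ∀ (n : ℤ) (a : A), a ∈ grading n → d a ∈ grading (n + 1)
  d_sq : ∀ a : A, d (d a) = 0
  leibniz : ∀ (i : ℤ) (a b : A), a ∈ grading i →
      d (a * b) = d a * b + (Int.negOnePow i : ℤ) • (a * d b)

attribute [instance] DGA.ringA DGA.algA DGA.gradedA

variable {k}

/-- A DG algebra is connected if it is concentrated in non-negative degrees
and its degree `0` part is `k·1`. -/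
def DGA.connected (𝔸 : DGA k) : Prop :=
  (∀ n : ℤ, n < 0 → 𝔸.grading n = ⊥) ∧ 𝔸.grading 0 = Submodule.span k {(1 : 𝔸.A)}

/-- An augmentation of a DG algebra: an algebra map to `k` killing the image of the
differential and all nonzero degrees.  (For a connected DG algebra this is the canonical
projection onto degree `0`.) -/
structure DGA.Aug (𝔸 : DGA k) where
  ε : 𝔸.A →ₐ[k] k
  ε_d : ∀ a, ε (𝔸.d a) = 0
  ε_deg : ∀ n : ℤ, n ≠ 0 → ∀ a ∈ 𝔸.grading n, ε a = 0

/-- A (left) differential graded module over a DG algebra. -/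
structure DGMod (𝔸 : DGA k) where
  M : Type
  [acg : AddCommGroup M]
  [amod : Module 𝔸.A M]
  [kmod : Module k M]
  [tower : IsScalarTower k 𝔸.A M]
  grading : ℤ → Submodule k M
  [decomp : DirectSum.Decomposition grading]
  smul_mem : ∀ (i j : ℤ) (a : 𝔸.A) (m : M), a ∈ 𝔸.grading i → m ∈ grading j →
      a • m ∈ grading (i + j)
  dM : M →ₗ[k] M
  dM_deg : ∀ (n : ℤ) (m : M), m ∈ grading n → dM m ∈ grading (n + 1)
  dM_sq : ∀ m : M, dM (dM m) = 0
  leibniz : ∀ (i : ℤ) (a : 𝔸.A) (m : M), a ∈ 𝔸.grading i →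
      dM (a • m) = 𝔸.d a • m + (Int.negOnePow i : ℤ) • (a • dM m)

attribute [instance] DGMod.acg DGMod.amod DGMod.kmod DGMod.tower DGMod.decomp

/-- The submodule `I(A)·M` where `I(A) = ker ε` is the augmentation ideal. -/
def DGMod.IP {𝔸 : DGA k} (ε : 𝔸.Aug) (P : DGMod 𝔸) : Submodule 𝔸.A P.M :=
  Submodule.span 𝔸.A {x | ∃ (a : 𝔸.A) (m : P.M), ε.ε a = 0 ∧ x = a • m}

/-- A DG module is minimal if `d(M) ⊆ I(A)·M`. -/
def DGMod.Minimal {𝔸 : DGA k} (ε : 𝔸.Aug) (P : DGMod 𝔸) : Prop :=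
  ∀ m : P.M, P.dM m ∈ P.IP ε

/-- A semifree resolution of the trivial DG module `k` over an augmented DG algebra:
a semifree DG module (with a chosen semibasis, witnessing semifreeness) together with a
quasi-isomorphism `εP` onto the trivial module `k` (concentrated in degree `0`,
with `A` acting via the augmentation). -/
structure SFR {𝔸 : DGA k} (ε : 𝔸.Aug) extends DGMod 𝔸 where
  ι : Type
  bas : Module.Basis ι 𝔸.A M
  degB : ι → ℤ
  homog : ∀ i, bas i ∈ grading (degB i)
  lvl : ι → ℕ
  d_lvl : ∀ i, dM (bas i) ∈ Submodule.span 𝔸.A (bas '' {j | lvl j < lvl i})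
  εP : M →ₗ[k] k
  εP_lin : ∀ (a : 𝔸.A) (m : M), εP (a • m) = ε.ε a * εP m
  εP_deg : ∀ n : ℤ, n ≠ 0 → ∀ m ∈ grading n, εP m = 0
  εP_d : ∀ m, εP (dM m) = 0
  qis_surj : ∃ m ∈ grading 0, dM m = 0 ∧ εP m = 1
  qis_ker : ∀ (n : ℤ) (m : M), m ∈ grading n → dM m = 0 → εP m = 0 →
      m ∈ LinearMap.range dM

/-- `Ext^n_A(k,k) = 0`, expressed via a semifree resolution `P` of `k`: every
`A`-semilinear functional `P → k` of cohomological degree `n` which is a cocycle is a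
coboundary in `Hom_A(P,k)`. -/
def ExtVanishAt {𝔸 : DGA k} (ε : 𝔸.Aug) (P : SFR ε) (n : ℤ) : Prop :=
  ∀ f : P.M →ₗ[k] k,
    (∀ (a : 𝔸.A) (m : P.M), f (a • m) = ε.ε a * f m) →
    (∀ i : ℤ, i ≠ -n → ∀ m ∈ P.grading i, f m = 0) →
    (∀ m, f (P.dM m) = 0) →
    ∃ g : P.M →ₗ[k] k,
      (∀ (a : 𝔸.A) (m : P.M), g (a • m) = ε.ε a * g m) ∧
      (∀ i : ℤ, i ≠ -(n - 1) → ∀ m ∈ P.grading i, g m = 0) ∧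
      ∀ m, f m = g (P.dM m)

/-- `Ext^n_A(k,k) = 0` for all `n ≠ 0` (the Koszul property, via Proposition 1.1). -/
def ExtVanish (𝔸 : DGA k) (ε : 𝔸.Aug) : Prop :=
  ∀ P : SFR ε, ∀ n : ℤ, n ≠ 0 → ExtVanishAt ε P n

/-- `Tor^n_A(k,k) = 0` for `n ≠ 0`: for any semifree resolution `P` of `k`, the complex
`k ⊗_A P = P/I(A)P` has vanishing cohomology in nonzero degrees. -/
def TorVanish (𝔸 : DGA k) (ε : 𝔸.Aug) : Prop :=
  ∀ P : SFR ε, ∀ n : ℤ, n ≠ 0 → ∀ m ∈ P.grading n,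
    P.dM m ∈ P.toDGMod.IP ε →
      ∃ y ∈ P.grading (n - 1), m - P.dM y ∈ P.toDGMod.IP ε

/-- `A` is a Koszul DG algebra: the trivial DG module `k` has a minimal semifree
resolution whose semibasis consists of elements of degree `0`. -/
def IsKoszul (𝔸 : DGA k) (ε : 𝔸.Aug) : Prop :=
  ∃ P : SFR ε, P.toDGMod.Minimal ε ∧ ∀ i, P.degB i = 0

/-- A presentation of the cohomology algebra `H(𝔸)` by a DG algebra `𝔹` (with zero
differential): a map defined on cocycles of `𝔸`, multiplicative, additive, grading
preserving, surjective, with kernel exactly the coboundaries. -/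
structure HPres (𝔸 𝔹 : DGA k) where
  φ : 𝔸.A → 𝔹.A
  map_add : ∀ a b, 𝔸.d a = 0 → 𝔸.d b = 0 → φ (a + b) = φ a + φ b
  map_smul : ∀ (c : k) (a), 𝔸.d a = 0 → φ (c • a) = c • φ a
  map_mul : ∀ a b, 𝔸.d a = 0 → 𝔸.d b = 0 → φ (a * b) = φ a * φ b
  map_one : φ 1 = 1
  surj : ∀ n : ℤ, ∀ y ∈ 𝔹.grading n, ∃ a, 𝔸.d a = 0 ∧ a ∈ 𝔸.grading n ∧ φ a = y
  ker : ∀ a, 𝔸.d a = 0 → (φ a = 0 ↔ a ∈ LinearMap.range 𝔸.d)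
  graded : ∀ (n : ℤ) (a), 𝔸.d a = 0 → a ∈ 𝔸.grading n → φ a ∈ 𝔹.grading n

/-- The `k`-span of the semibasis of `P`. -/
def SFR.kE {𝔸 : DGA k} {ε : 𝔸.Aug} (P : SFR ε) : Submodule k P.M :=
  Submodule.span k (Set.range P.bas)

/-- The standard semifree filtration of `P` associated to its semibasis:
`F(0) = A·(kE ∩ ker d)` and `F(n+1) = A·(kE ∩ d⁻¹ F(n))`. -/
def SFR.stdF {𝔸 : DGA k} {ε : 𝔸.Aug} (P : SFR ε) : ℕ → Submodule 𝔸.A P.M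
  | 0 => Submodule.span 𝔸.A ((P.kE ⊓ LinearMap.ker P.dM : Submodule k P.M) : Set P.M)
  | n + 1 => Submodule.span 𝔸.A
      ((P.kE ⊓ Submodule.comap P.dM ((SFR.stdF P n).restrictScalars k) :
        Submodule k P.M) : Set P.M)

/-- The underlying space of the Ext-algebra `E = Ext⁰_A(k,k)` of a Koszul DG algebra,
realized as the `A`-semilinear degree `0` cocycle functionals on a (minimal) semifree
resolution `P` of `k`. -/
def ExtSpace {𝔸 : DGA k} {ε : 𝔸.Aug} (P : SFR ε) : Submodule k (P.M →ₗ[k] k) where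
  carrier := {f | (∀ (a : 𝔸.A) (m : P.M), f (a • m) = ε.ε a * f m) ∧
      (∀ n : ℤ, n ≠ 0 → ∀ m ∈ P.grading n, f m = 0) ∧ ∀ m, f (P.dM m) = 0}
  add_mem' := by
    rintro f g ⟨hf1, hf2, hf3⟩ ⟨hg1, hg2, hg3⟩
    refine ⟨fun a m => ?_, fun n hn m hm => ?_, fun m => ?_⟩
    · simp [hf1, hg1, mul_add]
    · simp [hf2 n hn m hm, hg2 n hn m hm]
    · simp [hf3, hg3]
  zero_mem' := by
    exact ⟨fun a m => by simp, fun n hn m hm => rfl, fun m => rfl⟩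
  smul_mem' := by
    rintro c f ⟨hf1, hf2, hf3⟩
    refine ⟨fun a m => ?_, fun n hn m hm => ?_, fun m => ?_⟩
    · simp [hf1, mul_left_comm]
    · simp [hf2 n hn m hm]
    · simp [hf3]

/-- The unit of the Ext-algebra: the class of the resolution map `εP` itself. -/
def unitE {𝔸 : DGA k} {ε : 𝔸.Aug} (P : SFR ε) : ↥(ExtSpace P) :=
  ⟨P.εP, P.εP_lin, P.εP_deg, P.εP_d⟩

/-- `g : P → P` is a lift (through the resolution `εP : P → k`) of the Ext-class `x`:
an `A`-linear chain map of degree `0` with `εP ∘ g = x`. -/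
def IsLift {𝔸 : DGA k} {ε : 𝔸.Aug} (P : SFR ε) (g : P.M →ₗ[k] P.M)
    (x : ↥(ExtSpace P)) : Prop :=
  (∀ (a : 𝔸.A) (m : P.M), g (a • m) = a • g m) ∧
  (∀ n : ℤ, ∀ m ∈ P.grading n, g m ∈ P.grading n) ∧
  (∀ m, g (P.dM m) = P.dM (g m)) ∧
  (∀ m, (x : P.M →ₗ[k] k) m = P.εP (g m))

/-- `mul` is the Yoneda (composition) product on `E = Ext⁰_A(k,k)`:
`y·x = y ∘ g` for any lift `g` of `x`. -/
def MulCompat {𝔸 : DGA k} {ε : 𝔸.Aug} (P : SFR ε)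
    (mul : ↥(ExtSpace P) → ↥(ExtSpace P) → ↥(ExtSpace P)) : Prop :=
  ∀ (y x : ↥(ExtSpace P)) (g : P.M →ₗ[k] P.M), IsLift P g x →
    ∀ m, (↑(mul y x) : P.M →ₗ[k] k) m = (↑y : P.M →ₗ[k] k) (g m)

/-- `mul` makes `E` an associative unital `k`-algebra with unit `εP`, and is the
Yoneda product. -/
structure ExtMulOk {𝔸 : DGA k} {ε : 𝔸.Aug} (P : SFR ε)
    (mul : ↥(ExtSpace P) → ↥(ExtSpace P) → ↥(ExtSpace P)) : Prop where
  compat : MulCompat P mul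
  add_left : ∀ y₁ y₂ x, mul (y₁ + y₂) x = mul y₁ x + mul y₂ x
  add_right : ∀ y x₁ x₂, mul y (x₁ + x₂) = mul y x₁ + mul y x₂
  smul_left : ∀ (c : k) y x, mul (c • y) x = c • mul y x
  smul_right : ∀ (c : k) y x, mul y (c • x) = c • mul y x
  assoc : ∀ z y x, mul (mul z y) x = mul z (mul y x)
  one_mul : ∀ x, mul (unitE P) x = x
  mul_one : ∀ x, mul x (unitE P) = x

/-- The canonical decreasing filtration on the Ext-algebra: `F₀ = E` and
`F_{n+1} = {x ∈ E | x` vanishes on the standard filtration step `P(n)}`. -/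
noncomputable def Fil {𝔸 : DGA k} {ε : 𝔸.Aug} (P : SFR ε) : ℕ → Submodule k ↥(ExtSpace P)
  | 0 => ⊤
  | n + 1 => ⨅ (m : P.M) (_ : m ∈ P.stdF n),
      LinearMap.ker ((LinearMap.applyₗ m).comp (ExtSpace P).subtype)


/-! ### Auxiliary development -/

section AuxDev

variable {𝔸 : DGA k} {ε : 𝔸.Aug}

instance (Q : DGMod 𝔸) : SMulCommClass 𝔸.A k Q.M := by
  constructor
  intro a c m
  rw [← algebraMap_smul 𝔸.A c m, ← mul_smul, ← Algebra.commutes, mul_smul,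
    algebraMap_smul 𝔸.A c]

/-- Projection onto the degree `n` component of a decomposition. -/
noncomputable def prj {X : Type} [AddCommGroup X] [Module k X] (ℳ : ℤ → Submodule k X)
    [DirectSum.Decomposition ℳ] (n : ℤ) : X →ₗ[k] X :=
  (ℳ n).subtype ∘ₗ (DFinsupp.lapply n) ∘ₗ (DirectSum.decomposeLinearEquiv ℳ).toLinearMap

variable {X : Type} [AddCommGroup X] [Module k X] {ℳ : ℤ → Submodule k X}
  [DirectSum.Decomposition ℳ]

lemma prj_apply (n : ℤ) (m : X) : prj ℳ n m = ↑(DirectSum.decompose ℳ m n) := rfl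

lemma prj_mem (n : ℤ) (m : X) : prj ℳ n m ∈ ℳ n := (DirectSum.decompose ℳ m n).2

lemma prj_of_mem {i : ℤ} {m : X} (h : m ∈ ℳ i) (n : ℤ) :
    prj ℳ n m = if i = n then m else 0 := by
  rw [prj_apply]
  split
  · next heq => subst heq; rw [DirectSum.decompose_of_mem_same ℳ h]
  · next hne => rw [DirectSum.decompose_of_mem_ne ℳ h hne]

lemma prj_eq_self {n : ℤ} {m : X} (h : m ∈ ℳ n) : prj ℳ n m = m := by
  rw [prj_of_mem h, if_pos rfl]

lemma eq_on_homog {N : Type} [AddCommGroup N] [Module k N] (f g : X →ₗ[k] N)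
    (H : ∀ (i : ℤ) (z : X), z ∈ ℳ i → f z = g z) (m : X) : f m = g m := by
  classical
  rw [← DirectSum.sum_support_decompose ℳ m, map_sum, map_sum]
  exact Finset.sum_congr rfl fun i _ => H i _ (SetLike.coe_mem _)

lemma exists_sum_prj (m : X) : ∃ s : Finset ℤ, m = ∑ i ∈ s, prj ℳ i m := by
  classical
  exact ⟨(DirectSum.decompose ℳ m).support,
    (DirectSum.sum_support_decompose ℳ m).symm⟩

end AuxDev

section AuxDev2

variable {𝔸 : DGA k} {ε : 𝔸.Aug} (P : SFR ε)

/-- Scalar multiplication by a fixed ring element, as a `k`-linear map. -/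
def asmul (a : 𝔸.A) : P.M →ₗ[k] P.M where
  toFun m := a • m
  map_add' x y := smul_add a x y
  map_smul' c x := smul_comm a c x

/-- Scalar multiplication on a fixed module element, as a `k`-linear map. -/
def smulBy (m : P.M) : 𝔸.A →ₗ[k] P.M where
  toFun a := a • m
  map_add' x y := add_smul x y m
  map_smul' c a := smul_assoc c a m

@[simp] lemma asmul_apply (a : 𝔸.A) (m : P.M) : asmul P a m = a • m := rfl
@[simp] lemma smulBy_apply (m : P.M) (a : 𝔸.A) : smulBy P m a = a • m := rfl

lemma bas_sum (m : P.M) : (P.bas.repr m).sum (fun j a => a • P.bas j) = m := by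
  conv_rhs => rw [← P.bas.linearCombination_repr m]
  rw [Finsupp.linearCombination_apply]

/-- The set of homogeneous multiples of basis vectors indexed by `T`. -/
def hset (T : Set P.ι) : Set P.M :=
  {m | ∃ (i : ℤ) (a : 𝔸.A) (j : P.ι), a ∈ 𝔸.grading i ∧ j ∈ T ∧ m = a • P.bas j}

lemma smul_bas_mem_hspan (T : Set P.ι) (a : 𝔸.A) {j : P.ι} (hj : j ∈ T) :
    a • P.bas j ∈ Submodule.span k (hset P T) := by
  obtain ⟨s, hs⟩ := exists_sum_prj (ℳ := 𝔸.grading) a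
  rw [hs, Finset.sum_smul]
  exact Submodule.sum_mem _ fun i _ => Submodule.subset_span
    ⟨i, prj 𝔸.grading i a, j, prj_mem i a, hj, rfl⟩

lemma span_le_hspan (T : Set P.ι) :
    (Submodule.span 𝔸.A (P.bas '' T) : Set P.M) ⊆
      ↑(Submodule.span k (hset P T)) := by
  intro m hm
  induction hm using Submodule.span_induction with
  | mem z hz =>
    obtain ⟨j, hj, rfl⟩ := hz
    have := smul_bas_mem_hspan P T 1 hj
    rwa [one_smul] at this
  | zero => exact Submodule.zero_mem _
  | add u v _ _ hu hv => exact Submodule.add_mem _ hu hv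
  | smul a u _ hu =>
    have : a • u ∈ Submodule.map (asmul P a) (Submodule.span k (hset P T)) :=
      ⟨u, hu, rfl⟩
    rw [Submodule.map_span] at this
    refine Submodule.span_le.2 ?_ this
    rintro z ⟨w, ⟨i, b, j, _, hj, rfl⟩, rfl⟩
    have : asmul P a (b • P.bas j) = (a * b) • P.bas j := by
      rw [asmul_apply, mul_smul]
    rw [this]
    exact smul_bas_mem_hspan P T _ hj

lemma span_homog_induction (T : Set P.ι) {p : P.M → Prop} (h0 : p 0)
    (hadd : ∀ u v, p u → p v → p (u + v)) (hksmul : ∀ (c : k) u, p u → p (c • u))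
    (hgen : ∀ (i : ℤ) (a : 𝔸.A) (j : P.ι), a ∈ 𝔸.grading i → j ∈ T → p (a • P.bas j)) :
    ∀ m ∈ Submodule.span 𝔸.A (P.bas '' T), p m := by
  intro m hm
  have hm2 := span_le_hspan P T hm
  clear hm
  induction hm2 using Submodule.span_induction with
  | mem z hz => obtain ⟨i, a, j, ha, hj, rfl⟩ := hz; exact hgen i a j ha hj
  | zero => exact h0
  | add u v _ _ hu hv => exact hadd u v hu hv
  | smul c u _ hu => exact hksmul c u hu

end AuxDev2

section AuxDev3

variable {𝔸 : DGA k} {ε : 𝔸.Aug} (P : SFR ε)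

lemma prjA_neg (hconn : 𝔸.connected) {n : ℤ} (hn : n < 0) (a : 𝔸.A) :
    prj 𝔸.grading n a = 0 := by
  have := prj_mem (ℳ := 𝔸.grading) n a
  rw [hconn.1 n hn] at this
  simpa using this

lemma prjA_zero (hconn : 𝔸.connected) (a : 𝔸.A) :
    prj 𝔸.grading 0 a = ε.ε a • (1 : 𝔸.A) := by
  have hmem : prj 𝔸.grading 0 a ∈ Submodule.span k {(1 : 𝔸.A)} := by
    rw [← hconn.2]; exact prj_mem 0 a
  obtain ⟨c, hc⟩ := Submodule.mem_span_singleton.1 hmem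
  have hε : ε.ε (prj 𝔸.grading 0 a) = ε.ε a := by
    have := eq_on_homog (ℳ := 𝔸.grading)
      (ε.ε.toLinearMap ∘ₗ prj 𝔸.grading 0) ε.ε.toLinearMap ?_ a
    · simpa using this
    · intro i z hz
      by_cases hi : i = 0
      · subst hi; simp [prj_eq_self hz]
      · simp [prj_of_mem hz 0, hi, ε.ε_deg i hi z hz]
  rw [← hc]
  have : ε.ε (c • (1 : 𝔸.A)) = c := by simp
  rw [← hc] at hε
  rw [this] at hε
  rw [hε]

lemma bas_mem_grading0 (hdeg : ∀ i, P.degB i = 0) (j : P.ι) : P.bas j ∈ P.grading 0 := by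
  have := P.homog j; rwa [hdeg j] at this

lemma prj_smul_bas (hdeg : ∀ i, P.degB i = 0) (n : ℤ) (a : 𝔸.A) (j : P.ι) :
    prj P.grading n (a • P.bas j) = (prj 𝔸.grading n a) • P.bas j := by
  have := eq_on_homog (ℳ := 𝔸.grading)
    ((prj P.grading n) ∘ₗ smulBy P (P.bas j)) ((smulBy P (P.bas j)) ∘ₗ prj 𝔸.grading n)
    ?_ a
  · simpa using this
  · intro i z hz
    have hmem : z • P.bas j ∈ P.grading i := by
      have := P.smul_mem i 0 z (P.bas j) hz (bas_mem_grading0 P hdeg j)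
      rwa [add_zero] at this
    simp only [LinearMap.comp_apply, smulBy_apply]
    rw [prj_of_mem hmem n, prj_of_mem hz n]
    split <;> simp

lemma prj_neg_P (hconn : 𝔸.connected) (hdeg : ∀ i, P.degB i = 0) {n : ℤ} (hn : n < 0)
    (m : P.M) : prj P.grading n m = 0 := by
  conv_lhs => rw [← bas_sum P m]
  rw [map_finsuppSum]
  rw [Finsupp.sum]
  refine Finset.sum_eq_zero fun j _ => ?_
  rw [prj_smul_bas P hdeg, prjA_neg hconn hn, zero_smul]

lemma kE_le_grading0 (hdeg : ∀ i, P.degB i = 0) : ∀ m ∈ P.kE, m ∈ P.grading 0 := by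
  intro m hm
  refine Submodule.span_le.2 ?_ hm
  rintro z ⟨j, rfl⟩
  exact bas_mem_grading0 P hdeg j

lemma grading0_le_kE (hconn : 𝔸.connected) (hdeg : ∀ i, P.degB i = 0) :
    ∀ m ∈ P.grading 0, m ∈ P.kE := by
  intro m hm
  have key : prj P.grading 0 m ∈ P.kE := by
    rw [← bas_sum P m, map_finsuppSum, Finsupp.sum]
    refine Submodule.sum_mem _ fun j _ => ?_
    rw [prj_smul_bas P hdeg, prjA_zero (ε := ε) hconn, smul_assoc, one_smul]
    exact Submodule.smul_mem _ _ (Submodule.subset_span ⟨j, rfl⟩)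
  rwa [prj_eq_self hm] at key

lemma prj_d (n : ℤ) (m : P.M) :
    prj P.grading (n + 1) (P.dM m) = P.dM (prj P.grading n m) := by
  have := eq_on_homog (ℳ := P.grading)
    ((prj P.grading (n+1)) ∘ₗ P.dM) (P.dM ∘ₗ prj P.grading n) ?_ m
  · simpa using this
  · intro i z hz
    simp only [LinearMap.comp_apply]
    rw [prj_of_mem (P.dM_deg i z hz) (n+1), prj_of_mem hz n]
    by_cases hi : i = n
    · subst hi; simp
    · rw [if_neg (by omega), if_neg hi, map_zero]

lemma uniq0 (hconn : 𝔸.connected) (hdeg : ∀ i, P.degB i = 0) {m : P.M} (h0 : m ∈ P.grading 0) (hd : P.dM m = 0) (he : P.εP m = 0) :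
    m = 0 := by
  obtain ⟨y, hy⟩ := P.qis_ker 0 m h0 hd he
  have : m = prj P.grading 0 m := (prj_eq_self h0).symm
  rw [this, ← hy]
  have h01 : (0 : ℤ) = (-1) + 1 := by ring
  rw [h01, prj_d, prj_neg_P P hconn hdeg (by norm_num), map_zero]

end AuxDev3

section AuxDev4

variable {𝔸 : DGA k} {ε : 𝔸.Aug} (P : SFR ε)

/-- A chosen cocycle in degree `0` mapping to `1` under `εP`. -/
noncomputable def eP : P.M := P.qis_surj.choose

lemma eP_mem : eP P ∈ P.grading 0 := P.qis_surj.choose_spec.1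
lemma eP_d : P.dM (eP P) = 0 := P.qis_surj.choose_spec.2.1
lemma eP_eps : P.εP (eP P) = 1 := P.qis_surj.choose_spec.2.2

open Classical in
/-- Choice of a degree-`0` preimage under the differential (junk value `0` otherwise). -/
noncomputable def solve (w : P.M) : P.M :=
  if h : ∃ u ∈ P.grading 0, P.dM u = w then h.choose else 0

lemma solve_spec {w : P.M} (h : ∃ u ∈ P.grading 0, P.dM u = w) :
    solve P w ∈ P.grading 0 ∧ P.dM (solve P w) = w := by
  rw [solve]
  rw [dif_pos h]
  exact ⟨h.choose_spec.1, h.choose_spec.2⟩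

variable (x : P.M →ₗ[k] k)

/-- Recursive construction of the values of a lift of `x` on the semibasis. -/
noncomputable def Gv : ℕ → P.ι → P.M
  | 0 => fun _ => 0
  | (n+1) => fun i =>
      if P.lvl i ≤ n then
        solve P ((P.bas.repr (P.dM (P.bas i))).sum fun j a => a • Gv n j) +
          (x (P.bas i) -
            P.εP (solve P ((P.bas.repr (P.dM (P.bas i))).sum fun j a => a • Gv n j))) • eP P
      else 0

lemma repr_d_support (i j : P.ι) (h : (P.bas.repr (P.dM (P.bas i))) j ≠ 0) :
    P.lvl j < P.lvl i := by
  have hs := (Module.Basis.mem_span_image P.bas).1 (P.d_lvl i)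
  exact hs (Finsupp.mem_support_iff.2 h)

lemma Gv_stab : ∀ (N : ℕ) (i : P.ι) (n n' : ℕ), P.lvl i < N → P.lvl i < n →
    P.lvl i < n' → Gv P x n i = Gv P x n' i := by
  intro N
  induction N with
  | zero => intro i n n' h _ _; exact absurd h (Nat.not_lt_zero _)
  | succ N IH =>
    intro i n n' hN hn hn'
    obtain ⟨a, rfl⟩ : ∃ a, n = a + 1 := ⟨n - 1, by omega⟩
    obtain ⟨b, rfl⟩ : ∃ b, n' = b + 1 := ⟨n' - 1, by omega⟩
    have ha : P.lvl i ≤ a := by omega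
    have hb : P.lvl i ≤ b := by omega
    have hsum : ((P.bas.repr (P.dM (P.bas i))).sum fun j c => c • Gv P x a j) =
        ((P.bas.repr (P.dM (P.bas i))).sum fun j c => c • Gv P x b j) := by
      refine Finsupp.sum_congr fun j hj => ?_
      have hlt := repr_d_support P i j (Finsupp.mem_support_iff.1 hj)
      rw [IH j a b (by omega) (by omega) (by omega)]
    show Gv P x (a+1) i = Gv P x (b+1) i
    simp only [Gv]
    rw [if_pos ha, if_pos hb, hsum]

/-- The values of the canonical lift of `x` on the semibasis. -/
noncomputable def vals (i : P.ι) : P.M := Gv P x (P.lvl i + 1) i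

/-- The canonical `A`-linear lift of `x` through the resolution. -/
noncomputable def gm : P.M →ₗ[𝔸.A] P.M := P.bas.constr k (vals P x)

lemma gm_apply (m : P.M) :
    gm P x m = (P.bas.repr m).sum fun j a => a • vals P x j :=
  P.bas.constr_apply k _ m

@[simp] lemma gm_bas (i : P.ι) : gm P x (P.bas i) = vals P x i :=
  P.bas.constr_basis k _ i

lemma vals_eq (i : P.ι) :
    vals P x i = solve P (gm P x (P.dM (P.bas i))) +
      (x (P.bas i) - P.εP (solve P (gm P x (P.dM (P.bas i))))) • eP P := by
  have hsum : ((P.bas.repr (P.dM (P.bas i))).sum fun j c => c • Gv P x (P.lvl i) j) =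
      gm P x (P.dM (P.bas i)) := by
    rw [gm_apply]
    refine Finsupp.sum_congr fun j hj => ?_
    have hlt := repr_d_support P i j (Finsupp.mem_support_iff.1 hj)
    rw [Gv_stab P x (P.lvl j + 1) j (P.lvl i) (P.lvl j + 1) (by omega) (by omega) (by omega)]
    rfl
  show Gv P x (P.lvl i + 1) i = _
  simp only [Gv]
  rw [if_pos (le_refl _), hsum]

end AuxDev4

section AuxDev5

variable {𝔸 : DGA k} {ε : 𝔸.Aug} (P : SFR ε) (x : P.M →ₗ[k] k)

lemma key_on (hdeg : ∀ i, P.degB i = 0)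
    (hx1 : ∀ (a : 𝔸.A) (m : P.M), x (a • m) = ε.ε a * x m) (T : Set P.ι)
    (h0 : ∀ j ∈ T, vals P x j ∈ P.grading 0)
    (h2 : ∀ j ∈ T, P.dM (vals P x j) = gm P x (P.dM (P.bas j)))
    (h3 : ∀ j ∈ T, P.εP (vals P x j) = x (P.bas j)) :
    ∀ m ∈ Submodule.span 𝔸.A (P.bas '' T),
      P.dM (gm P x m) = gm P x (P.dM m) ∧
      (∀ n : ℤ, prj P.grading n (gm P x m) = gm P x (prj P.grading n m)) ∧
      P.εP (gm P x m) = x m := by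
  refine span_homog_induction P T ?_ ?_ ?_ ?_
  · refine ⟨by simp, fun n => by simp, by simp⟩
  · rintro u v ⟨hu1, hu2, hu3⟩ ⟨hv1, hv2, hv3⟩
    refine ⟨?_, fun n => ?_, ?_⟩
    · simp [map_add, hu1, hv1]
    · simp [map_add, hu2 n, hv2 n]
    · simp [map_add, hu3, hv3]
  · rintro c u ⟨hu1, hu2, hu3⟩
    have hgc : gm P x (c • u) = c • gm P x u := LinearMap.map_smul_of_tower _ c u
    refine ⟨?_, fun n => ?_, ?_⟩
    · rw [hgc, map_smul, hu1, ← LinearMap.map_smul_of_tower (gm P x) c, map_smul P.dM c u]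
    · rw [hgc, map_smul, hu2 n, ← LinearMap.map_smul_of_tower (gm P x) c,
        map_smul (prj P.grading n) c u]
    · rw [hgc, map_smul, hu3, map_smul, smul_eq_mul]
  · rintro i a j ha hj
    have hgab : gm P x (a • P.bas j) = a • vals P x j := by rw [map_smul, gm_bas]
    have hmv : a • vals P x j ∈ P.grading i := by
      have := P.smul_mem i 0 a _ ha (h0 j hj); rwa [add_zero] at this
    have hmb : a • P.bas j ∈ P.grading i := by
      have := P.smul_mem i 0 a _ ha (bas_mem_grading0 P hdeg j); rwa [add_zero] at this
    refine ⟨?_, fun n => ?_, ?_⟩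
    · calc P.dM (gm P x (a • P.bas j)) = P.dM (a • vals P x j) := by rw [hgab]
        _ = 𝔸.d a • vals P x j + (Int.negOnePow i : ℤ) • (a • P.dM (vals P x j)) :=
            P.leibniz i a _ ha
        _ = 𝔸.d a • vals P x j +
              (Int.negOnePow i : ℤ) • (a • gm P x (P.dM (P.bas j))) := by rw [h2 j hj]
        _ = gm P x (P.dM (a • P.bas j)) := by
            rw [P.leibniz i a _ ha, map_add, map_smul, gm_bas, map_zsmul, map_smul]
    · rw [hgab, prj_of_mem hmv n, prj_of_mem hmb n]
      by_cases h : i = n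
      · rw [if_pos h, if_pos h, map_smul, gm_bas]
      · rw [if_neg h, if_neg h, map_zero]
    · rw [hgab, P.εP_lin, h3 j hj, ← hx1]

lemma vals_props (hconn : 𝔸.connected) (hdeg : ∀ i, P.degB i = 0)
    (hx1 : ∀ (a : 𝔸.A) (m : P.M), x (a • m) = ε.ε a * x m) :
    ∀ i : P.ι, vals P x i ∈ P.grading 0 ∧
      P.dM (vals P x i) = gm P x (P.dM (P.bas i)) ∧
      P.εP (vals P x i) = x (P.bas i) := by
  suffices H : ∀ (L : ℕ) (i : P.ι), P.lvl i < L →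
      vals P x i ∈ P.grading 0 ∧
      P.dM (vals P x i) = gm P x (P.dM (P.bas i)) ∧
      P.εP (vals P x i) = x (P.bas i) by
    exact fun i => H (P.lvl i + 1) i (Nat.lt_succ_self _)
  intro L
  induction L with
  | zero => intro i hi; exact absurd hi (Nat.not_lt_zero _)
  | succ L IH =>
    intro i hi
    set T : Set P.ι := {j | P.lvl j < P.lvl i} with hT
    have hkey := key_on P x hdeg hx1 T
      (fun j hj => (IH j (by exact lt_of_lt_of_le hj (by omega))).1)
      (fun j hj => (IH j (by exact lt_of_lt_of_le hj (by omega))).2.1)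
      (fun j hj => (IH j (by exact lt_of_lt_of_le hj (by omega))).2.2)
    have hdspan : P.dM (P.bas i) ∈ Submodule.span 𝔸.A (P.bas '' T) := P.d_lvl i
    obtain ⟨hk1, hk2, hk3⟩ := hkey _ hdspan
    have hmem1 : P.dM (P.bas i) ∈ P.grading 1 := by
      have := P.dM_deg 0 _ (bas_mem_grading0 P hdeg i); rwa [zero_add] at this
    set w := gm P x (P.dM (P.bas i)) with hw
    have hw1 : w ∈ P.grading 1 := by
      have h1 : prj P.grading 1 w = w := by rw [hk2 1, prj_eq_self hmem1]
      rw [← h1]; exact prj_mem 1 w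
    have hwd : P.dM w = 0 := by rw [hk1, P.dM_sq, map_zero]
    have hwe : P.εP w = 0 := P.εP_deg 1 one_ne_zero w hw1
    have hex : ∃ u ∈ P.grading 0, P.dM u = w := by
      obtain ⟨y, hy⟩ := P.qis_ker 1 w hw1 hwd hwe
      refine ⟨prj P.grading 0 y, prj_mem 0 y, ?_⟩
      have h01 : (1 : ℤ) = 0 + 1 := by ring
      rw [← prj_d, ← h01, hy, prj_eq_self hw1]
    obtain ⟨hs0, hsd⟩ := solve_spec P hex
    have hveq := vals_eq P x i
    rw [← hw] at hveq
    refine ⟨?_, ?_, ?_⟩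
    · rw [hveq]
      exact Submodule.add_mem _ hs0 (Submodule.smul_mem _ _ (eP_mem P))
    · rw [hveq, map_add, hsd, map_smul, eP_d, smul_zero, add_zero]
    · rw [hveq, map_add, map_smul, eP_eps, smul_eq_mul, mul_one]
      ring

lemma gm_good (hconn : 𝔸.connected) (hdeg : ∀ i, P.degB i = 0)
    (hx1 : ∀ (a : 𝔸.A) (m : P.M), x (a • m) = ε.ε a * x m) (m : P.M) :
    P.dM (gm P x m) = gm P x (P.dM m) ∧
    (∀ n : ℤ, prj P.grading n (gm P x m) = gm P x (prj P.grading n m)) ∧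
    P.εP (gm P x m) = x m := by
  have hall := vals_props P x hconn hdeg hx1
  have := key_on P x hdeg hx1 Set.univ (fun j _ => (hall j).1)
    (fun j _ => (hall j).2.1) (fun j _ => (hall j).2.2) m ?_
  · exact this
  · rw [Set.image_univ, P.bas.span_eq]
    exact Submodule.mem_top

lemma gm_grading (hconn : 𝔸.connected) (hdeg : ∀ i, P.degB i = 0)
    (hx1 : ∀ (a : 𝔸.A) (m : P.M), x (a • m) = ε.ε a * x m) {n : ℤ} {m : P.M}
    (hm : m ∈ P.grading n) : gm P x m ∈ P.grading n := by
  have h := (gm_good P x hconn hdeg hx1 m).2.1 n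
  rw [prj_eq_self hm] at h
  rw [← h]
  exact prj_mem n _

end AuxDev5

section AuxDev6

variable {𝔸 : DGA k} {ε : 𝔸.Aug} (P : SFR ε)

lemma mem_extSpace_iff (f : P.M →ₗ[k] k) :
    f ∈ ExtSpace P ↔ ((∀ (a : 𝔸.A) (m : P.M), f (a • m) = ε.ε a * f m) ∧
      (∀ n : ℤ, n ≠ 0 → ∀ m ∈ P.grading n, f m = 0) ∧ ∀ m, f (P.dM m) = 0) :=
  Iff.rfl

lemma fil_zero_eq : Fil P 0 = ⊤ := rfl

lemma mem_fil_succ_iff (n : ℕ) (x : ↥(ExtSpace P)) :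
    x ∈ Fil P (n + 1) ↔ ∀ m ∈ P.stdF n, (↑x : P.M →ₗ[k] k) m = 0 := by
  show x ∈ (⨅ (m : P.M) (_ : m ∈ P.stdF n),
      LinearMap.ker ((LinearMap.applyₗ m).comp (ExtSpace P).subtype)) ↔ _
  simp only [Submodule.mem_iInf, LinearMap.mem_ker, LinearMap.comp_apply,
    Submodule.coe_subtype]
  exact Iff.rfl

/-- The canonical lift, as a `k`-linear endomorphism. -/
noncomputable def gLk (x : ↥(ExtSpace P)) : P.M →ₗ[k] P.M :=
  LinearMap.restrictScalars k (gm P x.1)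

@[simp] lemma gLk_apply (x : ↥(ExtSpace P)) (m : P.M) :
    gLk P x m = gm P x.1 m := rfl

lemma isLift_gLk (hconn : 𝔸.connected) (hdeg : ∀ i, P.degB i = 0)
    (x : ↥(ExtSpace P)) : IsLift P (gLk P x) x := by
  obtain ⟨hx1, hx2, hx3⟩ := (mem_extSpace_iff P x.1).1 x.2
  refine ⟨fun a m => map_smul (gm P _) a m, ?_, ?_, ?_⟩
  · intro n m hm
    exact gm_grading P _ hconn hdeg hx1 hm
  · intro m
    exact ((gm_good P _ hconn hdeg hx1 m).1).symm
  · intro m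
    exact ((gm_good P _ hconn hdeg hx1 m).2.2).symm

lemma lift_unique (hconn : 𝔸.connected) (hdeg : ∀ i, P.degB i = 0)
    {g₁ g₂ : P.M →ₗ[k] P.M} {x : ↥(ExtSpace P)}
    (h₁ : IsLift P g₁ x) (h₂ : IsLift P g₂ x) : ∀ m, g₁ m = g₂ m := by
  have hbas : ∀ (L : ℕ) (i : P.ι), P.lvl i < L → g₁ (P.bas i) = g₂ (P.bas i) := by
    intro L
    induction L with
    | zero => intro i hi; exact absurd hi (Nat.not_lt_zero _)
    | succ L IH =>
      intro i hi
      have hd : g₁ (P.dM (P.bas i)) = g₂ (P.dM (P.bas i)) := by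
        have hgen : ∀ z ∈ Submodule.span 𝔸.A (P.bas '' {j | P.lvl j < P.lvl i}),
            g₁ z = g₂ z := by
          intro z hz
          induction hz using Submodule.span_induction with
          | mem z hz =>
            obtain ⟨j, hj, rfl⟩ := hz
            exact IH j (by exact lt_of_lt_of_le hj (by omega))
          | zero => simp
          | add u v _ _ hu hv => rw [map_add, map_add, hu, hv]
          | smul a u _ hu => rw [h₁.1, h₂.1, hu]
        exact hgen _ (P.d_lvl i)
      set δ := g₁ (P.bas i) - g₂ (P.bas i) with hδ
      have hδ0 : δ ∈ P.grading 0 :=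
        Submodule.sub_mem _ (h₁.2.1 0 _ (bas_mem_grading0 P hdeg i))
          (h₂.2.1 0 _ (bas_mem_grading0 P hdeg i))
      have hδd : P.dM δ = 0 := by
        rw [hδ, map_sub, ← h₁.2.2.1, ← h₂.2.2.1, hd, sub_self]
      have hδe : P.εP δ = 0 := by
        rw [hδ, map_sub, ← h₁.2.2.2, ← h₂.2.2.2, sub_self]
      have h0 := uniq0 P hconn hdeg hδ0 hδd hδe
      rw [hδ] at h0
      exact sub_eq_zero.1 h0
  intro m
  have hm : m ∈ Submodule.span 𝔸.A (Set.range P.bas) := by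
    rw [P.bas.span_eq]; exact Submodule.mem_top
  induction hm using Submodule.span_induction with
  | mem z hz => obtain ⟨j, rfl⟩ := hz; exact hbas (P.lvl j + 1) j (Nat.lt_succ_self _)
  | zero => simp
  | add u v _ _ hu hv => rw [map_add, map_add, hu, hv]
  | smul a u _ hu => rw [h₁.1, h₂.1, hu]

end AuxDev6

section AuxDev7

variable {𝔸 : DGA k} {ε : 𝔸.Aug} (P : SFR ε)

lemma stdF_mono (n : ℕ) : P.stdF n ≤ P.stdF (n + 1) := by
  induction n with
  | zero =>
    refine Submodule.span_le.2 ?_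
    intro v hv
    obtain ⟨hk, hd⟩ := Submodule.mem_inf.1 hv
    refine Submodule.subset_span (Submodule.mem_inf.2 ⟨hk, ?_⟩)
    show P.dM v ∈ (P.stdF 0).restrictScalars k
    have : P.dM v = 0 := hd
    rw [this]
    exact Submodule.zero_mem _
  | succ n IH =>
    refine Submodule.span_le.2 ?_
    intro v hv
    obtain ⟨hk, hd⟩ := Submodule.mem_inf.1 hv
    refine Submodule.subset_span (Submodule.mem_inf.2 ⟨hk, ?_⟩)
    exact IH hd

lemma stdF_le (n m : ℕ) (h : n ≤ m) : P.stdF n ≤ P.stdF m := by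
  induction m with
  | zero => have : n = 0 := by omega
            subst this; exact le_refl _
  | succ m IH =>
    rcases Nat.lt_or_ge n (m+1) with h' | h'
    · exact le_trans (IH (by omega)) (stdF_mono P m)
    · have : n = m + 1 := by omega
      subst this; exact le_refl _

variable (hconn : 𝔸.connected) (hdeg : ∀ i, P.degB i = 0)

lemma g_zero (hconn : 𝔸.connected) (hdeg : ∀ i, P.degB i = 0) {x : ↥(ExtSpace P)}
    {g : P.M →ₗ[k] P.M} (hl : IsLift P g x) (N : ℕ)
    (hkill : ∀ m ∈ P.stdF N, (↑x : P.M →ₗ[k] k) m = 0) :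
    ∀ v ∈ P.stdF N, g v = 0 := by
  induction N with
  | zero =>
    intro v hv
    rw [SFR.stdF] at hv
    induction hv using Submodule.span_induction with
    | mem z hz =>
      obtain ⟨hzk, hzd⟩ := Submodule.mem_inf.1 hz
      have hzd' : P.dM z = 0 := hzd
      have h0 : g z ∈ P.grading 0 := hl.2.1 0 z (kE_le_grading0 P hdeg z hzk)
      have hd : P.dM (g z) = 0 := by rw [← hl.2.2.1 z, hzd', map_zero]
      have he : P.εP (g z) = 0 := by
        rw [← hl.2.2.2 z]
        exact hkill z (by rw [SFR.stdF]; exact Submodule.subset_span hz)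
      exact uniq0 P hconn hdeg h0 hd he
    | zero => simp
    | add u v _ _ hu hv => rw [map_add, hu, hv, add_zero]
    | smul a u _ hu => rw [hl.1, hu, smul_zero]
  | succ N IH =>
    intro v hv
    rw [SFR.stdF] at hv
    induction hv using Submodule.span_induction with
    | mem z hz =>
      obtain ⟨hzk, hzd⟩ := Submodule.mem_inf.1 hz
      have hzd' : P.dM z ∈ P.stdF N := hzd
      have h0 : g z ∈ P.grading 0 := hl.2.1 0 z (kE_le_grading0 P hdeg z hzk)
      have hd : P.dM (g z) = 0 := by
        rw [← hl.2.2.1 z]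
        exact IH (fun m hm => hkill m (stdF_mono P N hm)) _ hzd'
      have he : P.εP (g z) = 0 := by
        rw [← hl.2.2.2 z]
        exact hkill z (by rw [SFR.stdF]; exact Submodule.subset_span hz)
      exact uniq0 P hconn hdeg h0 hd he
    | zero => simp
    | add u v _ _ hu hv => rw [map_add, hu, hv, add_zero]
    | smul a u _ hu => rw [hl.1, hu, smul_zero]

lemma g_stdF (hconn : 𝔸.connected) (hdeg : ∀ i, P.degB i = 0) {x : ↥(ExtSpace P)}
    {g : P.M →ₗ[k] P.M} (hl : IsLift P g x) (N : ℕ) :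
    ∀ v ∈ P.stdF N, g v ∈ P.stdF N := by
  induction N with
  | zero =>
    intro v hv
    rw [SFR.stdF] at hv ⊢
    induction hv using Submodule.span_induction with
    | mem z hz =>
      obtain ⟨hzk, hzd⟩ := Submodule.mem_inf.1 hz
      have hzd' : P.dM z = 0 := hzd
      have hk : g z ∈ P.kE :=
        grading0_le_kE P hconn hdeg _ (hl.2.1 0 z (kE_le_grading0 P hdeg z hzk))
      have hd : P.dM (g z) = 0 := by rw [← hl.2.2.1 z, hzd', map_zero]
      exact Submodule.subset_span (Submodule.mem_inf.2 ⟨hk, hd⟩)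
    | zero => simp
    | add u v _ _ hu hv => rw [map_add]; exact Submodule.add_mem _ hu hv
    | smul a u _ hu => rw [hl.1]; exact Submodule.smul_mem' _ _ hu
  | succ N IH =>
    intro v hv
    rw [SFR.stdF] at hv
    induction hv using Submodule.span_induction with
    | mem z hz =>
      obtain ⟨hzk, hzd⟩ := Submodule.mem_inf.1 hz
      have hzd' : P.dM z ∈ P.stdF N := hzd
      have hk : g z ∈ P.kE :=
        grading0_le_kE P hconn hdeg _ (hl.2.1 0 z (kE_le_grading0 P hdeg z hzk))
      have hd : P.dM (g z) ∈ P.stdF N := by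
        rw [← hl.2.2.1 z]; exact IH _ hzd'
      show g z ∈ P.stdF (N+1)
      rw [SFR.stdF]
      exact Submodule.subset_span (Submodule.mem_inf.2 ⟨hk, hd⟩)
    | zero => simp
    | add u v _ _ hu hv => rw [map_add]; exact Submodule.add_mem _ hu hv
    | smul a u _ hu => rw [hl.1]; exact Submodule.smul_mem' _ _ hu

lemma g_shift (hconn : 𝔸.connected) (hdeg : ∀ i, P.degB i = 0) {x : ↥(ExtSpace P)}
    {g : P.M →ₗ[k] P.M} (hl : IsLift P g x) (n' : ℕ)
    (hkill : ∀ m ∈ P.stdF n', (↑x : P.M →ₗ[k] k) m = 0) :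
    ∀ t : ℕ, ∀ v ∈ P.stdF (n' + 1 + t), g v ∈ P.stdF t := by
  intro t
  induction t with
  | zero =>
    intro v hv
    rw [show n' + 1 + 0 = n' + 1 from rfl, SFR.stdF] at hv
    induction hv using Submodule.span_induction with
    | mem z hz =>
      obtain ⟨hzk, hzd⟩ := Submodule.mem_inf.1 hz
      have hzd' : P.dM z ∈ P.stdF n' := hzd
      have hk : g z ∈ P.kE :=
        grading0_le_kE P hconn hdeg _ (hl.2.1 0 z (kE_le_grading0 P hdeg z hzk))
      have hd : P.dM (g z) = 0 := by
        rw [← hl.2.2.1 z]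
        exact g_zero P hconn hdeg hl n' hkill _ hzd'
      show g z ∈ P.stdF 0
      rw [SFR.stdF]
      exact Submodule.subset_span (Submodule.mem_inf.2 ⟨hk, hd⟩)
    | zero => simp
    | add u v _ _ hu hv => rw [map_add]; exact Submodule.add_mem _ hu hv
    | smul a u _ hu => rw [hl.1]; exact Submodule.smul_mem' _ _ hu
  | succ t IH =>
    intro v hv
    rw [show n' + 1 + (t + 1) = (n' + 1 + t) + 1 from rfl, SFR.stdF] at hv
    induction hv using Submodule.span_induction with
    | mem z hz =>
      obtain ⟨hzk, hzd⟩ := Submodule.mem_inf.1 hz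
      have hzd' : P.dM z ∈ P.stdF (n' + 1 + t) := hzd
      have hk : g z ∈ P.kE :=
        grading0_le_kE P hconn hdeg _ (hl.2.1 0 z (kE_le_grading0 P hdeg z hzk))
      have hd : P.dM (g z) ∈ P.stdF t := by
        rw [← hl.2.2.1 z]; exact IH _ hzd'
      show g z ∈ P.stdF (t+1)
      rw [SFR.stdF]
      exact Submodule.subset_span (Submodule.mem_inf.2 ⟨hk, hd⟩)
    | zero => simp
    | add u v _ _ hu hv => rw [map_add]; exact Submodule.add_mem _ hu hv
    | smul a u _ hu => rw [hl.1]; exact Submodule.smul_mem' _ _ hu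

end AuxDev7

section AuxDev8

variable {𝔸 : DGA k} {ε : 𝔸.Aug} (P : SFR ε)

/-- The Yoneda product on the Ext-space: `y ⬝ x = y ∘ (lift of x)`. -/
noncomputable def mulE (hconn : 𝔸.connected) (hdeg : ∀ i, P.degB i = 0)
    (y x : ↥(ExtSpace P)) : ↥(ExtSpace P) :=
  ⟨y.1 ∘ₗ gLk P x, by
    obtain ⟨hy1, hy2, hy3⟩ := (mem_extSpace_iff P y.1).1 y.2
    have hl := isLift_gLk P hconn hdeg x
    refine (mem_extSpace_iff P _).2 ⟨?_, ?_, ?_⟩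
    · intro a m; simp only [LinearMap.comp_apply]; rw [hl.1, hy1]
    · intro n hn m hm; simp only [LinearMap.comp_apply]
      exact hy2 n hn _ (hl.2.1 n m hm)
    · intro m; simp only [LinearMap.comp_apply]; rw [hl.2.2.1, hy3]⟩

lemma mulE_apply (hconn : 𝔸.connected) (hdeg : ∀ i, P.degB i = 0)
    (y x : ↥(ExtSpace P)) (m : P.M) :
    (mulE P hconn hdeg y x).1 m = y.1 (gLk P x m) := rfl

end AuxDev8

attribute [irreducible] ExtSpace Fil

instance {𝔸 : DGA k} {ε : 𝔸.Aug} (P : SFR ε) : AddCommGroup ↥(ExtSpace P) :=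
  inferInstance

instance {𝔸 : DGA k} {ε : 𝔸.Aug} (P : SFR ε) : Module k ↥(ExtSpace P) :=
  inferInstance

noncomputable instance {𝔸 : DGA k} {ε : 𝔸.Aug} (P : SFR ε) (n : ℕ) :
    AddCommGroup ↥(Fil P n) := inferInstance

noncomputable instance {𝔸 : DGA k} {ε : 𝔸.Aug} (P : SFR ε) (n : ℕ) :
    Module k ↥(Fil P n) := inferInstance
/-- Powers with respect to a (Yoneda) multiplication on the Ext-space. -/
def mulPow {𝔸 : DGA k} {ε : 𝔸.Aug} (P : SFR ε)
    (mul : ↥(ExtSpace P) → ↥(ExtSpace P) → ↥(ExtSpace P)) (x : ↥(ExtSpace P)) :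
    ℕ → ↥(ExtSpace P)
  | 0 => unitE P
  | n + 1 => mul x (mulPow P mul x n)

/-- The `n`-th graded piece `F_n/F_{n+1}` of the associated graded algebra of the
filtered Ext-algebra. -/
def GrPiece {𝔸 : DGA k} {ε : 𝔸.Aug} (P : SFR ε) (n : ℕ) :=
  ↥(Fil P n) ⧸ Submodule.comap (Fil P n).subtype (Fil P (n + 1))

noncomputable instance {𝔸 : DGA k} {ε : 𝔸.Aug} (P : SFR ε) (n : ℕ) :
    AddCommGroup (GrPiece P n) := by unfold GrPiece; infer_instance

noncomputable instance {𝔸 : DGA k} {ε : 𝔸.Aug} (P : SFR ε) (n : ℕ) :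
    Module k (GrPiece P n) := by unfold GrPiece; infer_instance

/-- The class of an element of `F_n` in the graded piece `F_n/F_{n+1}`. -/
noncomputable def grMk {𝔸 : DGA k} {ε : 𝔸.Aug} (P : SFR ε) (n : ℕ) (x : ↥(Fil P n)) : GrPiece P n :=
  Submodule.Quotient.mk x
/-- Let `A` be a Koszul DG algebra.  Then the Ext-algebra
`E = Ext*_A(k,k) = Ext⁰_A(k,k)` (realized on a minimal semifree resolution `P` of `k`
with semibasis in degree `0`) carries the Yoneda product `mul`, making it an associative
unital `k`-algebra; the decreasing filtration `F_n = {x | x` kills `P(n-1)}`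
(`= ∏_{i ≥ n} V(i)^*`) makes `E` a filtered algebra (`F_n · F_m ⊆ F_{n+m}`); and `E` is
augmented via the projection onto `F_0/F_1 ≅ k`. -/
theorem ext_algebra_filtered_augmented (𝔸 : DGA k) (hconn : 𝔸.connected) (ε : 𝔸.Aug)
    (hKoszul : ExtVanish 𝔸 ε) (P : SFR ε) (hmin : P.toDGMod.Minimal ε)
    (hdeg : ∀ i, P.degB i = 0) :
    ∃ mul : ↥(ExtSpace P) → ↥(ExtSpace P) → ↥(ExtSpace P),
      ExtMulOk P mul ∧
      -- the filtration is decreasing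
      (∀ n : ℕ, Fil P (n + 1) ≤ Fil P n) ∧
      -- `E` is a filtered algebra: `F_m · F_n ⊆ F_{n+m}`
      (∀ (n m : ℕ) (x y : ↥(ExtSpace P)), x ∈ Fil P n → y ∈ Fil P m →
        mul y x ∈ Fil P (n + m)) ∧
      -- `E` is augmented, via the projection onto `F_0/F_1 ≅ k`
      (∃ εE : ↥(ExtSpace P) →ₗ[k] k,
        εE (unitE P) = 1 ∧
        LinearMap.ker εE = Fil P 1 ∧
        (∀ y x, εE (mul y x) = εE y * εE x)) ∧
      IsCompl (Submodule.span k {unitE P}) (Fil P 1) := by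
  classical
  -- basic facts about the chosen unit cocycle
  have heP0 : eP P ∈ P.grading 0 := eP_mem P
  have hePk : eP P ∈ P.kE := grading0_le_kE P hconn hdeg _ heP0
  have hePstd : eP P ∈ P.stdF 0 := by
    rw [SFR.stdF]
    exact Submodule.subset_span (Submodule.mem_inf.2 ⟨hePk, eP_d P⟩)
  -- every lift sends `eP` to `x(eP) • eP`
  have hgeP : ∀ x : ↥(ExtSpace P), gLk P x (eP P) = x.1 (eP P) • eP P := by
    intro x
    have hl := isLift_gLk P hconn hdeg x
    have hδ0 : gLk P x (eP P) - x.1 (eP P) • eP P ∈ P.grading 0 :=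
      Submodule.sub_mem _ (hl.2.1 0 _ heP0) (Submodule.smul_mem _ _ heP0)
    have hδd : P.dM (gLk P x (eP P) - x.1 (eP P) • eP P) = 0 := by
      rw [map_sub, ← hl.2.2.1, eP_d, map_zero, map_smul, eP_d, smul_zero, sub_zero]
    have hδe : P.εP (gLk P x (eP P) - x.1 (eP P) • eP P) = 0 := by
      rw [map_sub, ← hl.2.2.2, map_smul, eP_eps, smul_eq_mul, mul_one, sub_self]
    have := uniq0 P hconn hdeg hδ0 hδd hδe
    exact sub_eq_zero.1 this
  -- every generator of `stdF 0` is a multiple of `eP`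
  have hstd0 : ∀ z, z ∈ P.kE → P.dM z = 0 → z = P.εP z • eP P := by
    intro z hzk hzd
    have hz0 : z ∈ P.grading 0 := kE_le_grading0 P hdeg z hzk
    have hδ0 : z - P.εP z • eP P ∈ P.grading 0 :=
      Submodule.sub_mem _ hz0 (Submodule.smul_mem _ _ heP0)
    have hδd : P.dM (z - P.εP z • eP P) = 0 := by
      rw [map_sub, hzd, map_smul, eP_d, smul_zero, sub_zero]
    have hδe : P.εP (z - P.εP z • eP P) = 0 := by
      rw [map_sub, map_smul, eP_eps, smul_eq_mul, mul_one, sub_self]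
    exact sub_eq_zero.1 (uniq0 P hconn hdeg hδ0 hδd hδe)
  -- the augmentation
  set εE : ↥(ExtSpace P) →ₗ[k] k :=
    (LinearMap.applyₗ (eP P)).comp (ExtSpace P).subtype with hεE
  have hεE_apply : ∀ x : ↥(ExtSpace P), εE x = x.1 (eP P) := fun _ => rfl
  have hker : LinearMap.ker εE = Fil P 1 := by
    ext x
    rw [LinearMap.mem_ker, hεE_apply, mem_fil_succ_iff]
    constructor
    · intro h m hm
      rw [SFR.stdF] at hm
      obtain ⟨hx1, hx2, hx3⟩ := (mem_extSpace_iff P x.1).1 x.2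
      induction hm using Submodule.span_induction with
      | mem z hz =>
        obtain ⟨hzk, hzd⟩ := Submodule.mem_inf.1 hz
        have : z = P.εP z • eP P := hstd0 z hzk hzd
        rw [this, map_smul, smul_eq_mul]
        show P.εP z * x.1 (eP P) = 0
        rw [h, mul_zero]
      | zero => simp
      | add u v _ _ hu hv =>
        show x.1 (u + v) = 0
        rw [map_add, hu, hv, add_zero]
      | smul a u _ hu =>
        show x.1 (a • u) = 0
        rw [hx1, hu, mul_zero]
    · intro h
      exact h _ hePstd
  refine ⟨mulE P hconn hdeg, ?_, ?_, ?_, ?_, ?_⟩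
  · -- ExtMulOk
    refine ⟨?_, ?_, ?_, ?_, ?_, ?_, ?_, ?_⟩
    · -- compat
      intro y x g hg m
      rw [mulE_apply]
      exact congrArg y.1 (lift_unique P hconn hdeg (isLift_gLk P hconn hdeg x) hg m)
    · -- add_left
      intro y₁ y₂ x
      exact Subtype.ext (LinearMap.ext fun m => rfl)
    · -- add_right
      intro y x₁ x₂
      have hsum : IsLift P (gLk P x₁ + gLk P x₂) (x₁ + x₂) := by
        have h1 := isLift_gLk P hconn hdeg x₁
        have h2 := isLift_gLk P hconn hdeg x₂
        refine ⟨fun a m => ?_, fun n m hm => ?_, fun m => ?_, fun m => ?_⟩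
        · simp only [LinearMap.add_apply, h1.1, h2.1, smul_add]
        · exact Submodule.add_mem _ (h1.2.1 n m hm) (h2.2.1 n m hm)
        · simp only [LinearMap.add_apply, map_add, h1.2.2.1 m, h2.2.2.1 m]
        · show (x₁ + x₂).1 m = P.εP ((gLk P x₁ + gLk P x₂) m)
          have : (x₁ + x₂).1 m = x₁.1 m + x₂.1 m := rfl
          rw [this, h1.2.2.2 m, h2.2.2.2 m]
          simp only [LinearMap.add_apply, map_add]
      apply Subtype.ext; apply LinearMap.ext; intro m
      have heq := lift_unique P hconn hdeg (isLift_gLk P hconn hdeg (x₁ + x₂)) hsum m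
      show y.1 (gLk P (x₁ + x₂) m) = (mulE P hconn hdeg y x₁).1 m +
        (mulE P hconn hdeg y x₂).1 m
      rw [heq]
      show y.1 (gLk P x₁ m + gLk P x₂ m) = _
      rw [map_add, mulE_apply, mulE_apply]
    · -- smul_left
      intro c y x
      exact Subtype.ext (LinearMap.ext fun m => rfl)
    · -- smul_right
      intro c y x
      have hsm : IsLift P (c • gLk P x) (c • x) := by
        have h1 := isLift_gLk P hconn hdeg x
        refine ⟨fun a m => ?_, fun n m hm => ?_, fun m => ?_, fun m => ?_⟩
        · simp only [LinearMap.smul_apply, h1.1]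
          rw [smul_comm]
        · exact Submodule.smul_mem _ _ (h1.2.1 n m hm)
        · simp only [LinearMap.smul_apply, map_smul, h1.2.2.1 m]
        · show (c • x).1 m = P.εP ((c • gLk P x) m)
          have : (c • x).1 m = c * x.1 m := rfl
          rw [this, h1.2.2.2 m]
          simp only [LinearMap.smul_apply, map_smul, smul_eq_mul]
      apply Subtype.ext; apply LinearMap.ext; intro m
      have heq := lift_unique P hconn hdeg (isLift_gLk P hconn hdeg (c • x)) hsm m
      show y.1 (gLk P (c • x) m) = (c • (mulE P hconn hdeg y x)).1 m
      rw [heq]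
      show y.1 (c • gLk P x m) = c * (mulE P hconn hdeg y x).1 m
      rw [map_smul, mulE_apply, smul_eq_mul]
    · -- assoc
      intro z y x
      have hcomp : IsLift P ((gLk P y).comp (gLk P x)) (mulE P hconn hdeg y x) := by
        have h1 := isLift_gLk P hconn hdeg y
        have h2 := isLift_gLk P hconn hdeg x
        refine ⟨fun a m => ?_, fun n m hm => ?_, fun m => ?_, fun m => ?_⟩
        · simp only [LinearMap.comp_apply, h1.1, h2.1]
        · exact h1.2.1 n _ (h2.2.1 n m hm)
        · simp only [LinearMap.comp_apply, h2.2.2.1 m]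
          exact h1.2.2.1 _
        · rw [mulE_apply]
          exact h1.2.2.2 _
      apply Subtype.ext; apply LinearMap.ext; intro m
      have heq := lift_unique P hconn hdeg
        (isLift_gLk P hconn hdeg (mulE P hconn hdeg y x)) hcomp m
      show (mulE P hconn hdeg z y).1 (gLk P x m) =
        z.1 (gLk P (mulE P hconn hdeg y x) m)
      rw [heq, mulE_apply]
      rfl
    · -- one_mul
      intro x
      apply Subtype.ext; apply LinearMap.ext; intro m
      show (unitE P).1 (gLk P x m) = x.1 m
      exact ((isLift_gLk P hconn hdeg x).2.2.2 m).symm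
    · -- mul_one
      intro x
      have hid : IsLift P LinearMap.id (unitE P) :=
        ⟨fun a m => rfl, fun n m hm => hm, fun m => rfl, fun m => rfl⟩
      apply Subtype.ext; apply LinearMap.ext; intro m
      have heq := lift_unique P hconn hdeg (isLift_gLk P hconn hdeg (unitE P)) hid m
      show x.1 (gLk P (unitE P) m) = x.1 m
      rw [heq]
      rfl
  · -- decreasing
    intro n
    match n with
    | 0 => rw [fil_zero_eq]; exact le_top
    | (n+1) =>
      intro x hx
      rw [mem_fil_succ_iff] at hx ⊢
      exact fun m hm => hx m (stdF_mono P n hm)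
  · -- filtered algebra
    intro n m x y hx hy
    match n, m with
    | 0, 0 => rw [fil_zero_eq]; exact Submodule.mem_top
    | 0, (m'+1) =>
      rw [mem_fil_succ_iff] at hy
      rw [Nat.zero_add, mem_fil_succ_iff]
      intro v hv
      rw [mulE_apply]
      exact hy _ (g_stdF P hconn hdeg (isLift_gLk P hconn hdeg x) m' v hv)
    | (n'+1), 0 =>
      rw [mem_fil_succ_iff] at hx
      have : (n' + 1 + 0) = n' + 1 := rfl
      rw [this, mem_fil_succ_iff]
      intro v hv
      rw [mulE_apply, g_zero P hconn hdeg (isLift_gLk P hconn hdeg x) n' hx v hv,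
        map_zero]
    | (n'+1), (m'+1) =>
      rw [mem_fil_succ_iff] at hx hy
      have harith : (n' + 1 + (m' + 1)) = (n' + 1 + m') + 1 := rfl
      rw [harith, mem_fil_succ_iff]
      intro v hv
      rw [mulE_apply]
      exact hy _ (g_shift P hconn hdeg (isLift_gLk P hconn hdeg x) n' hx m' v hv)
  · -- augmentation
    refine ⟨εE, ?_, hker, ?_⟩
    · rw [hεE_apply]
      exact eP_eps P
    · intro y x
      rw [hεE_apply, hεE_apply, hεE_apply, mulE_apply, hgeP x, map_smul, smul_eq_mul]
      ring
  · -- IsCompl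
    constructor
    · rw [Submodule.disjoint_def]
      intro z hz1 hz2
      obtain ⟨c, hc⟩ := Submodule.mem_span_singleton.1 hz1
      rw [← hker, LinearMap.mem_ker, hεE_apply] at hz2
      rw [← hc] at hz2 ⊢
      have : (c • unitE P).1 (eP P) = c * P.εP (eP P) := rfl
      rw [this, eP_eps, mul_one] at hz2
      rw [hz2, zero_smul]
    · rw [codisjoint_iff, eq_top_iff]
      intro x _
      have hx2 : x - x.1 (eP P) • unitE P ∈ Fil P 1 := by
        rw [← hker, LinearMap.mem_ker, map_sub, map_smul, hεE_apply, hεE_apply]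
        have : (unitE P).1 (eP P) = 1 := eP_eps P
        rw [this, smul_eq_mul, mul_one, sub_self]
      refine Submodule.mem_sup.2 ⟨x.1 (eP P) • unitE P,
        Submodule.smul_mem _ _ (Submodule.mem_span_singleton_self _),
        x - x.1 (eP P) • unitE P, hx2, ?_⟩
      abel
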